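/- For n = 4, the maximal discriminant equals Δmax(4) = 4096·(7 − 4·√3), i.e. sSup { Δ(z) : z : Fin 4 → ℂ admissible } = 4096·(7 − 4·√3); moreover this value is attained by the kite configuration z with values 0, 2, √3 + i, √3 − i (where i is the imaginary unit). -/

import Mathlib

/-- The product over all ordered pairs `(i,j)` with `i ≠ j` of `dist (z i) (z j)`. -/
noncomputable def Delta (n : ℕ) (z : Fin n → ℂ) : ℝ :=
  ∏ p ∈ Finset.univ.filter (fun p : Fin n × Fin n => p.1 ≠ p.2), dist (z p.1) (z p.2)

/-- `z` is admissible if all pairwise distances are at most 2. -/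
def Admissible (n : ℕ) (z : Fin n → ℂ) : Prop :=
  ∀ i j, dist (z i) (z j) ≤ 2

/-- The maximal discriminant over admissible configurations. -/
noncomputable def Dmax (n : ℕ) : ℝ :=
  sSup {d : ℝ | ∃ z : Fin n → ℂ, Admissible n z ∧ Delta n z = d}

/-- The kite configuration with vertices `0, 2, √3 + i, √3 − i`. -/
noncomputable def kite : Fin 4 → ℂ :=
  ![0, 2, (Real.sqrt 3 : ℂ) + Complex.I, (Real.sqrt 3 : ℂ) - Complex.I]

open Real Metric Set Filter

theorem lemBCcore (P s3 : ℝ) (hP0 : 0 ≤ P) (hP : P ≤ 1/4) (hs3 : s3^2 = 3) (hs3' : 0 ≤ s3) :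
    P * (1 + 2*P - 2*Real.sqrt (3*P*(1-P))) ≤ (7-4*s3)/4 := by
  have hs3le : s3 ≤ 2 := by nlinarith
  have hP1 : (0:ℝ) ≤ 1 - P := by linarith
  have h1 : Real.sqrt (3*P*(1-P)) = Real.sqrt P * Real.sqrt (1-P) * s3 := by
    rw [show 3*P*(1-P) = P*(1-P)*s3^2 by rw [hs3]; ring]
    rw [Real.sqrt_mul (by positivity), Real.sqrt_mul hP0, Real.sqrt_sq hs3']
  have hsp := Real.sq_sqrt hP0
  have hsq := Real.sq_sqrt hP1
  set a := Real.sqrt P with ha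
  set b := Real.sqrt (1-P) with hb
  have ha0 : 0 ≤ a := Real.sqrt_nonneg _
  have hb0 : 0 ≤ b := Real.sqrt_nonneg _
  rw [h1]
  have key : P * (1 + 2*P - 2*(a*b*s3)) = (s3*P - a*b)^2 := by
    linear_combination (-(P^2)) * hs3 + (-(b^2)) * hsp + (-P) * hsq
  rw [key]
  have f1 : s3*a ≤ b := by
    have : s3*a = Real.sqrt (3*P) := by
      rw [Real.sqrt_mul (by norm_num : (0:ℝ) ≤ 3), show Real.sqrt 3 = s3 by
        rw [show (3:ℝ) = s3^2 by rw [hs3]]; exact Real.sqrt_sq hs3']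
    rw [this, hb]
    exact Real.sqrt_le_sqrt (by linarith)
  have f1' : 0 ≤ a*b - s3*P := by nlinarith [mul_le_mul_of_nonneg_left f1 ha0]
  have f2 : a*b ≤ s3*P + (2-s3)/2 := by
    have hab : a*b = Real.sqrt (P*(1-P)) := by rw [Real.sqrt_mul hP0]
    have hrhs : (0:ℝ) ≤ s3*P + (2-s3)/2 := by nlinarith [mul_nonneg hs3' hP0]
    have h5 : P*(1-P) ≤ (s3*P + (2-s3)/2)^2 := by nlinarith [sq_nonneg (2*P - (2-s3)/2)]
    calc a*b = Real.sqrt (P*(1-P)) := hab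
      _ ≤ Real.sqrt ((s3*P + (2-s3)/2)^2) := Real.sqrt_le_sqrt h5
      _ = s3*P + (2-s3)/2 := Real.sqrt_sq hrhs
  nlinarith [mul_nonneg f1' (by linarith : (0:ℝ) ≤ (2-s3)/2 + s3*P - a*b)]


-- full BC lemma
theorem lemBC (X Y s3 : ℝ) (hX0 : 0 ≤ X) (hX : X ≤ 1/2) (hY0 : 0 ≤ Y) (hY : Y ≤ 1/2)
    (hs3 : s3^2 = 3) (hs3' : 0 ≤ s3) :
    X*Y*(1 + 2*(X*Y) - 2*Real.sqrt (X*(2-X)*(Y*(2-Y)))) ≤ (7-4*s3)/4 := by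
  have hP0 : 0 ≤ X*Y := mul_nonneg hX0 hY0
  have hP : X*Y ≤ 1/4 := by nlinarith
  have hR : Real.sqrt (3*(X*Y)*(1-X*Y)) ≤ Real.sqrt (X*(2-X)*(Y*(2-Y))) := by
    apply Real.sqrt_le_sqrt; nlinarith [mul_nonneg (by linarith : (0:ℝ) ≤ 1-2*X) (by linarith : (0:ℝ) ≤ 1-2*Y), mul_nonneg hX0 hY0]
  calc X*Y*(1 + 2*(X*Y) - 2*Real.sqrt (X*(2-X)*(Y*(2-Y))))
      ≤ X*Y*(1 + 2*(X*Y) - 2*Real.sqrt (3*(X*Y)*(1-X*Y))) := by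
        have := mul_le_mul_of_nonneg_left hR (by linarith : (0:ℝ) ≤ 2*(X*Y))
        nlinarith [this]
    _ ≤ (7-4*s3)/4 := lemBCcore (X*Y) s3 hP0 hP hs3 hs3'

-- A-plus branch
theorem lemAplus (X Y s3 : ℝ) (hX0 : 0 ≤ X) (hX : X ≤ 1/2) (hY0 : 0 ≤ Y) (hY : Y ≤ 1/2)
    (hs3 : s3^2 = 3) (hs3' : 0 ≤ s3) :
    X*Y*(X + Y - X*Y - Real.sqrt (X*(2-X)*(Y*(2-Y)))) ≤ (7-4*s3)/8 := by
  have hP0 : 0 ≤ X*Y := mul_nonneg hX0 hY0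
  have hP : X*Y ≤ 1/4 := by nlinarith
  have hR : Real.sqrt (3*(X*Y)*(1-X*Y)) ≤ Real.sqrt (X*(2-X)*(Y*(2-Y))) := by
    apply Real.sqrt_le_sqrt; nlinarith [mul_nonneg (by linarith : (0:ℝ) ≤ 1-2*X) (by linarith : (0:ℝ) ≤ 1-2*Y), mul_nonneg hX0 hY0]
  have hXY : X + Y - X*Y ≤ 1/2 + X*Y := by nlinarith [mul_nonneg (by linarith : (0:ℝ) ≤ 1-2*Y) (by linarith : (0:ℝ) ≤ 1/2 - X)]
  have step : X*Y*(X + Y - X*Y - Real.sqrt (X*(2-X)*(Y*(2-Y))))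
      ≤ X*Y*(1/2 + X*Y - Real.sqrt (3*(X*Y)*(1-X*Y))) := by
    apply mul_le_mul_of_nonneg_left _ hP0
    linarith
  have core := lemBCcore (X*Y) s3 hP0 hP hs3 hs3'
  nlinarith [step, core]


theorem csStep (X Y : ℝ) (hX0 : 0 ≤ X) (hX : X ≤ 2) (hY0 : 0 ≤ Y) (hY : Y ≤ 2) :
    Real.sqrt (X*Y) + Real.sqrt ((2-X)*(2-Y)) ≤ 2 := by
  have h2X : (0:ℝ) ≤ 2-X := by linarith
  have h2Y : (0:ℝ) ≤ 2-Y := by linarith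
  have e1 : Real.sqrt (X*Y) = Real.sqrt X * Real.sqrt Y := Real.sqrt_mul hX0 _
  have e2 : Real.sqrt ((2-X)*(2-Y)) = Real.sqrt (2-X) * Real.sqrt (2-Y) := Real.sqrt_mul h2X _
  rw [e1, e2]
  have a := Real.sq_sqrt hX0
  have b := Real.sq_sqrt hY0
  have c := Real.sq_sqrt h2X
  have d := Real.sq_sqrt h2Y
  nlinarith [sq_nonneg (Real.sqrt X * Real.sqrt (2-Y) - Real.sqrt Y * Real.sqrt (2-X)),
    sq_nonneg (Real.sqrt X * Real.sqrt Y + Real.sqrt (2-X) * Real.sqrt (2-Y) - 2),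
    sq_nonneg (Real.sqrt X * Real.sqrt Y + Real.sqrt (2-X) * Real.sqrt (2-Y) + 2),
    Real.sqrt_nonneg X, Real.sqrt_nonneg Y, Real.sqrt_nonneg (2-X), Real.sqrt_nonneg (2-Y),
    mul_nonneg (Real.sqrt_nonneg X) (Real.sqrt_nonneg Y),
    mul_nonneg (Real.sqrt_nonneg (2-X)) (Real.sqrt_nonneg (2-Y))]

theorem cubicStep (C s3 : ℝ) (hC1 : C ≤ 1) (hC : s3/2 ≤ C) (hs3 : s3^2 = 3) (hs3' : 0 ≤ s3) :
    2*(1-C)^3*(1+C) ≤ (7-4*s3)/8 := by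
  nlinarith [sq_nonneg (C - s3/2), sq_nonneg (1-C), mul_nonneg (by linarith : (0:ℝ) ≤ C - s3/2) (sq_nonneg (1-C)), mul_nonneg (mul_nonneg (by linarith : (0:ℝ) ≤ C - s3/2) (by linarith : (0:ℝ) ≤ 1-C)) (by linarith : (0:ℝ) ≤ 1-C), sq_nonneg (C+1)]

theorem lemAminus (X Y s3 : ℝ) (hX0 : 0 ≤ X) (hX : X ≤ 1/2) (hY0 : 0 ≤ Y) (hY : Y ≤ 1/2)
    (hs3 : s3^2 = 3) (hs3' : 0 ≤ s3)
    (hD : X + Y - X*Y + Real.sqrt (X*(2-X)*(Y*(2-Y))) ≤ 1/2) :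
    X*Y*(X + Y - X*Y + Real.sqrt (X*(2-X)*(Y*(2-Y)))) ≤ (7-4*s3)/8 := by
  set R := Real.sqrt (X*(2-X)*(Y*(2-Y))) with hRdef
  set C := (Real.sqrt ((2-X)*(2-Y)) - Real.sqrt (X*Y))/2 with hC
  have h2X : (0:ℝ) ≤ 2-X := by linarith
  have h2Y : (0:ℝ) ≤ 2-Y := by linarith
  have hxy0 : 0 ≤ X*Y := mul_nonneg hX0 hY0
  have hab : Real.sqrt (X*Y) * Real.sqrt ((2-X)*(2-Y)) = R := by
    rw [hRdef, ← Real.sqrt_mul hxy0]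
    congr 1; ring
  have hsq1 := Real.sq_sqrt hxy0
  have hsq2 := Real.sq_sqrt (mul_nonneg h2X h2Y)
  have hs0 := Real.sqrt_nonneg (X*Y)
  have hs0' := Real.sqrt_nonneg ((2-X)*(2-Y))
  have hmono : Real.sqrt (X*Y) ≤ Real.sqrt ((2-X)*(2-Y)) := by
    apply Real.sqrt_le_sqrt
    have h1 : X*Y ≤ 1/4 := by nlinarith
    nlinarith [mul_le_mul (by linarith : (3:ℝ)/2 ≤ 2-X) (by linarith : (3:ℝ)/2 ≤ 2-Y) (by norm_num) h2X]
  have hCnn : 0 ≤ C := by rw [hC]; linarith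
  have hC2 : C^2 = ((2-X)*(2-Y) + X*Y - 2*R)/4 := by
    rw [hC]
    have : (Real.sqrt ((2-X)*(2-Y)) - Real.sqrt (X*Y))^2
        = (2-X)*(2-Y) + X*Y - 2*R := by
      rw [sub_sq, hsq1, hsq2]
      rw [show 2*Real.sqrt ((2-X)*(2-Y))*Real.sqrt (X*Y) = 2*(Real.sqrt (X*Y)*Real.sqrt ((2-X)*(2-Y))) by ring, hab]
      ring
    rw [div_pow, this]
    norm_num
  have hid : X + Y - X*Y + R = 2 - 2*C^2 := by
    rw [hC2]; ring
  have hCs3 : s3/2 ≤ C := by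
    have h34 : (3:ℝ)/4 ≤ C^2 := by nlinarith [hid, hD]
    nlinarith [hCnn, sq_nonneg (C - s3/2), sq_nonneg (C + s3/2)]
  have cs := csStep X Y hX0 (by linarith) hY0 (by linarith)
  have hC1 : C ≤ 1 := by
    rw [hC]
    have : Real.sqrt ((2-X)*(2-Y)) ≤ 2 := by linarith
    linarith
  have h1C : Real.sqrt (X*Y) ≤ 1 - C := by rw [hC]; linarith
  have hXYC : X*Y ≤ (1-C)^2 := by
    calc X*Y = Real.sqrt (X*Y)^2 := (Real.sq_sqrt hxy0).symm
      _ ≤ (1-C)^2 := pow_le_pow_left₀ hs0 h1C 2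
  have cubic := cubicStep C s3 hC1 hCs3 hs3 hs3'
  rw [hid]
  calc X*Y*(2-2*C^2) ≤ (1-C)^2*(2-2*C^2) := by
        apply mul_le_mul_of_nonneg_right hXYC
        nlinarith [sq_nonneg C]
    _ = 2*(1-C)^3*(1+C) := by ring
    _ ≤ (7-4*s3)/8 := cubic


-- case A dispatcher: unit vectors
theorem dispA (g h g' h' s3 : ℝ) (e1 : g^2+h^2 = 1) (e2 : g'^2+h'^2 = 1)
    (hg : 1/2 ≤ g) (hg' : 1/2 ≤ g') (hu : 1/2 ≤ g*g'+h*h') (hs3 : s3^2 = 3) (hs3' : 0 ≤ s3) :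
    (1-g)*(1-g')*(1-(g*g'+h*h')) ≤ (7-4*s3)/8 := by
  set X := 1-g with hXd
  set Y := 1-g' with hYd
  have hX0 : 0 ≤ X := by rw [hXd]; nlinarith [sq_nonneg h]
  have hX : X ≤ 1/2 := by rw [hXd]; linarith
  have hY0 : 0 ≤ Y := by rw [hYd]; nlinarith [sq_nonneg h']
  have hY : Y ≤ 1/2 := by rw [hYd]; linarith
  have hRabs : Real.sqrt (X*(2-X)*(Y*(2-Y))) = |h*h'| := by
    rw [show X*(2-X)*(Y*(2-Y)) = (h*h')^2 by rw [hXd, hYd]; nlinarith [e1, e2]]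
    exact Real.sqrt_sq_eq_abs _
  rcases le_or_gt 0 (h*h') with hs | hs
  · have habs : |h*h'| = h*h' := abs_of_nonneg hs
    have key : 1-(g*g'+h*h') = X + Y - X*Y - Real.sqrt (X*(2-X)*(Y*(2-Y))) := by
      rw [hRabs, habs, hXd, hYd]; ring
    rw [key]
    have := lemAplus X Y s3 hX0 hX hY0 hY hs3 hs3'
    linarith [this]
  · have habs : |h*h'| = -(h*h') := abs_of_neg hs
    have key : 1-(g*g'+h*h') = X + Y - X*Y + Real.sqrt (X*(2-X)*(Y*(2-Y))) := by
      rw [hRabs, habs, hXd, hYd]; ring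
    rw [key]
    have hD : X + Y - X*Y + Real.sqrt (X*(2-X)*(Y*(2-Y))) ≤ 1/2 := by
      rw [← key]; linarith
    have := lemAminus X Y s3 hX0 hX hY0 hY hs3 hs3' hD
    linarith [this]

-- case B/C dispatcher
theorem dispBC (g h W v K s3 : ℝ) (e1 : g^2+h^2 = 1) (e2 : W^2+v^2 = 1)
    (hKd : K = g*W+h*v)
    (hg : 1/2 ≤ g) (hK : 1/2 ≤ K) (hcon : 3-2*g-2*K+2*W ≤ 1)
    (hs3 : s3^2 = 3) (hs3' : 0 ≤ s3) :
    (1-g)*(1-K)*(3-2*g-2*K+2*W) ≤ (7-4*s3)/4 := by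
  have hX0 : 0 ≤ 1-g := by nlinarith [sq_nonneg h]
  have hX : 1-g ≤ 1/2 := by linarith
  have hY0 : 0 ≤ 1-K := by
    rw [hKd]; nlinarith [sq_nonneg (g*v - h*W), sq_nonneg (g*W+h*v-1)]
  have hY : 1-K ≤ 1/2 := by linarith
  have harg : 0 ≤ (1-g)*(2-(1-g))*((1-K)*(2-(1-K))) :=
    mul_nonneg (mul_nonneg hX0 (by linarith)) (mul_nonneg hY0 (by linarith))
  have hR0 : 0 ≤ Real.sqrt ((1-g)*(2-(1-g))*((1-K)*(2-(1-K)))) := Real.sqrt_nonneg _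
  have hRsq : (Real.sqrt ((1-g)*(2-(1-g))*((1-K)*(2-(1-K)))))^2
      = (1-g)*(2-(1-g))*((1-K)*(2-(1-K))) := Real.sq_sqrt harg
  set R := Real.sqrt ((1-g)*(2-(1-g))*((1-K)*(2-(1-K)))) with hRd
  clear_value R
  have hWgK : (W - g*K)^2 = (1-g)*(2-(1-g))*((1-K)*(2-(1-K))) := by
    subst hKd
    linear_combination (v^2)*e1 + (1-g^2)*e2
  have hfac : (W - g*K - R)*(W - g*K + R) = 0 := by nlinarith [hWgK, hRsq]
  rcases mul_eq_zero.1 hfac with hc | hc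
  · have hWval : W = g*K + R := by linarith
    have hfeas : W ≤ g + K - 1 := by linarith
    have heq : g + K - 1 - g*K = -((1-g)*(1-K)) := by ring
    have hRneg : R ≤ -((1-g)*(1-K)) := by linarith
    have hxy := mul_nonneg hX0 hY0
    have hXY0 : (1-g)*(1-K) = 0 := by linarith
    have hR00 : R = 0 := by linarith
    have h3 : (3-2*g-2*K+2*W) = 1 + 2*((1-g)*(1-K)) + 2*R := by
      rw [hWval]; ring
    rw [h3, hXY0, hR00]
    have h74 : 0 ≤ (7-4*s3)/4 := by nlinarith
    nlinarith
  · have hWval : W = g*K - R := by linarith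
    have h3 : (3-2*g-2*K+2*W) = 1 + 2*((1-g)*(1-K)) - 2*R := by
      rw [hWval]; ring
    rw [h3, hRd]
    exact lemBC (1-g) (1-K) s3 hX0 hX hY0 hY hs3 hs3'


lemma sqn (z : ℂ) : ‖z‖^2 = z.re^2 + z.im^2 := by
  rw [Complex.sq_norm, Complex.normSq_apply]; ring

lemma normFsq (c d : ℂ) : ‖(c^2-1)*(d^2-1)*(c-d)‖^2
    = ‖c+1‖^2*‖c-1‖^2*(‖d+1‖^2*‖d-1‖^2*‖c-d‖^2) := by
  rw [show (c^2-1 : ℂ) = (c+1)*(c-1) by ring, show (d^2-1 : ℂ) = (d+1)*(d-1) by ring]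
  rw [norm_mul, norm_mul, norm_mul, norm_mul]
  ring

set_option maxHeartbeats 1000000 in
theorem caseA (c d : ℂ) (s3 : ℝ) (hs3 : s3^2=3) (hs3' : 0 ≤ s3)
    (h1 : ‖c+1‖ = 2) (h2 : ‖d+1‖ = 2) (h3 : ‖c-1‖ ≤ 2) (h4 : ‖d-1‖ ≤ 2) (h5 : ‖c-d‖ ≤ 2) :
    ‖(c^2-1)*(d^2-1)*(c-d)‖^2 ≤ 1024*(7-4*s3) := by
  have n1 : (c.re+1)^2 + c.im^2 = 4 := by
    have h : ‖c+1‖^2 = 4 := by rw [h1]; norm_num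
    rw [sqn] at h; simpa using h
  have n2 : (d.re+1)^2 + d.im^2 = 4 := by
    have h : ‖d+1‖^2 = 4 := by rw [h2]; norm_num
    rw [sqn] at h; simpa using h
  have n3 : (c.re-1)^2 + c.im^2 ≤ 4 := by
    have h : ‖c-1‖^2 ≤ 4 := by nlinarith [norm_nonneg (c-1)]
    rw [sqn] at h; simpa using h
  have n4 : (d.re-1)^2 + d.im^2 ≤ 4 := by
    have h : ‖d-1‖^2 ≤ 4 := by nlinarith [norm_nonneg (d-1)]
    rw [sqn] at h; simpa using h
  have n5 : (c.re-d.re)^2 + (c.im-d.im)^2 ≤ 4 := by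
    have h : ‖c-d‖^2 ≤ 4 := by nlinarith [norm_nonneg (c-d)]
    rw [sqn] at h; simpa using h
  have main := dispA ((c.re+1)/2) (c.im/2) ((d.re+1)/2) (d.im/2) s3
    (by nlinarith [n1]) (by nlinarith [n2]) (by nlinarith [n1, n3]) (by nlinarith [n2, n4])
    (by nlinarith [n1, n2, n5]) hs3 hs3'
  rw [normFsq]
  have v1 : ‖c+1‖^2 = 4 := by rw [h1]; norm_num
  have v2 : ‖d+1‖^2 = 4 := by rw [h2]; norm_num
  have v3 : ‖c-1‖^2 = 8-8*((c.re+1)/2) := by rw [sqn]; simp; nlinarith [n1]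
  have v4 : ‖d-1‖^2 = 8-8*((d.re+1)/2) := by rw [sqn]; simp; nlinarith [n2]
  have v5 : ‖c-d‖^2 = 8-8*(((c.re+1)/2)*((d.re+1)/2)+(c.im/2)*(d.im/2)) := by
    rw [sqn]; simp; nlinarith [n1, n2]
  rw [v1, v2, v3, v4, v5]
  nlinarith [main]

set_option maxHeartbeats 1000000 in
theorem caseC (c d : ℂ) (s3 : ℝ) (hs3 : s3^2=3) (hs3' : 0 ≤ s3)
    (h1 : ‖c+1‖ = 2) (h5 : ‖c-d‖ = 2) (h3 : ‖c-1‖ ≤ 2) (h2 : ‖d+1‖ ≤ 2) (h4 : ‖d-1‖ ≤ 2) :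
    ‖(c^2-1)*(d^2-1)*(c-d)‖^2 ≤ 1024*(7-4*s3) := by
  have n1 : (c.re+1)^2 + c.im^2 = 4 := by
    have h : ‖c+1‖^2 = 4 := by rw [h1]; norm_num
    rw [sqn] at h; simpa using h
  have n5 : (c.re-d.re)^2 + (c.im-d.im)^2 = 4 := by
    have h : ‖c-d‖^2 = 4 := by rw [h5]; norm_num
    rw [sqn] at h; simpa using h
  have n3 : (c.re-1)^2 + c.im^2 ≤ 4 := by
    have h : ‖c-1‖^2 ≤ 4 := by nlinarith [norm_nonneg (c-1)]
    rw [sqn] at h; simpa using h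
  have n2 : (d.re+1)^2 + d.im^2 ≤ 4 := by
    have h : ‖d+1‖^2 ≤ 4 := by nlinarith [norm_nonneg (d+1)]
    rw [sqn] at h; simpa using h
  have n4 : (d.re-1)^2 + d.im^2 ≤ 4 := by
    have h : ‖d-1‖^2 ≤ 4 := by nlinarith [norm_nonneg (d-1)]
    rw [sqn] at h; simpa using h
  have main := dispBC ((c.re+1)/2) (c.im/2) ((c.re-d.re)/2) ((c.im-d.im)/2)
    (((c.re+1)/2)*((c.re-d.re)/2)+(c.im/2)*((c.im-d.im)/2)) s3
    (by nlinarith [n1]) (by nlinarith [n5]) rfl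
    (by nlinarith [n1, n3]) (by nlinarith [n1, n5, n2]) (by nlinarith [n1, n5, n4]) hs3 hs3'
  rw [normFsq]
  have v1 : ‖c+1‖^2 = 4 := by rw [h1]; norm_num
  have v5 : ‖c-d‖^2 = 4 := by rw [h5]; norm_num
  have v3 : ‖c-1‖^2 = 8-8*((c.re+1)/2) := by rw [sqn]; simp; nlinarith [n1]
  have v2 : ‖d+1‖^2 = 8-8*(((c.re+1)/2)*((c.re-d.re)/2)+(c.im/2)*((c.im-d.im)/2)) := by
    rw [sqn]; simp; nlinarith [n1, n5]
  have v4 : ‖d-1‖^2 = 4*(3-2*((c.re+1)/2)-2*(((c.re+1)/2)*((c.re-d.re)/2)+(c.im/2)*((c.im-d.im)/2))+2*((c.re-d.re)/2)) := by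
    rw [sqn]; simp; nlinarith [n1, n5]
  rw [v1, v2, v3, v4, v5]
  nlinarith [main]

set_option maxHeartbeats 1000000 in
theorem caseB (c d : ℂ) (s3 : ℝ) (hs3 : s3^2=3) (hs3' : 0 ≤ s3)
    (h1 : ‖c+1‖ = 2) (h4 : ‖d-1‖ = 2) (h3 : ‖c-1‖ ≤ 2) (h2 : ‖d+1‖ ≤ 2) (h5 : ‖c-d‖ ≤ 2) :
    ‖(c^2-1)*(d^2-1)*(c-d)‖^2 ≤ 1024*(7-4*s3) := by
  have n1 : (c.re+1)^2 + c.im^2 = 4 := by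
    have h : ‖c+1‖^2 = 4 := by rw [h1]; norm_num
    rw [sqn] at h; simpa using h
  have n4 : (d.re-1)^2 + d.im^2 = 4 := by
    have h : ‖d-1‖^2 = 4 := by rw [h4]; norm_num
    rw [sqn] at h; simpa using h
  have n3 : (c.re-1)^2 + c.im^2 ≤ 4 := by
    have h : ‖c-1‖^2 ≤ 4 := by nlinarith [norm_nonneg (c-1)]
    rw [sqn] at h; simpa using h
  have n2 : (d.re+1)^2 + d.im^2 ≤ 4 := by
    have h : ‖d+1‖^2 ≤ 4 := by nlinarith [norm_nonneg (d+1)]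
    rw [sqn] at h; simpa using h
  have n5 : (c.re-d.re)^2 + (c.im-d.im)^2 ≤ 4 := by
    have h : ‖c-d‖^2 ≤ 4 := by nlinarith [norm_nonneg (c-d)]
    rw [sqn] at h; simpa using h
  -- g=(c.re+1)/2, h=c.im/2, e=(d.re-1)/2, f=d.im/2
  -- W'' = -(g e + h f), v'' = g f - h e, K'' = -e
  have main := dispBC ((c.re+1)/2) (c.im/2)
    (-(((c.re+1)/2)*((d.re-1)/2)+(c.im/2)*(d.im/2)))
    (((c.re+1)/2)*(d.im/2)-(c.im/2)*((d.re-1)/2))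
    (-((d.re-1)/2)) s3
    (by nlinarith [n1]) (by nlinarith [n1, n4]) (by nlinarith [n1])
    (by nlinarith [n1, n3]) (by nlinarith [n4, n2]) (by nlinarith [n1, n4, n5]) hs3 hs3'
  rw [normFsq]
  have v1 : ‖c+1‖^2 = 4 := by rw [h1]; norm_num
  have v4 : ‖d-1‖^2 = 4 := by rw [h4]; norm_num
  have v3 : ‖c-1‖^2 = 8-8*((c.re+1)/2) := by rw [sqn]; simp; nlinarith [n1]
  have v2 : ‖d+1‖^2 = 8-8*(-((d.re-1)/2)) := by rw [sqn]; simp; nlinarith [n4]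
  have v5 : ‖c-d‖^2 = 4*(3-2*((c.re+1)/2)-2*(-((d.re-1)/2))+2*(-(((c.re+1)/2)*((d.re-1)/2)+(c.im/2)*(d.im/2)))) := by
    rw [sqn]; simp; nlinarith [n1, n4]
  rw [v1, v2, v3, v4, v5]
  nlinarith [main]


theorem maxmod (ps : Finset ℂ) (z₀ : ℂ) (hz₀ : ∀ p ∈ ps, ‖z₀ - p‖ < 2)
    (hne : ps.Nonempty)
    (f : ℂ → ℂ) (hf : Differentiable ℂ f) (C : ℝ)
    (hC : ∀ z : ℂ, (∀ p ∈ ps, ‖z - p‖ ≤ 2) → (∃ p ∈ ps, ‖z - p‖ = 2) → ‖f z‖ ≤ C) :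
    ∀ z : ℂ, (∀ p ∈ ps, ‖z - p‖ ≤ 2) → ‖f z‖ ≤ C := by
  intro z hz
  set U : Set ℂ := ⋂ p ∈ ps, Metric.ball p 2 with hU
  have hUopen : IsOpen U := isOpen_biInter_finset (fun p _ => isOpen_ball)
  obtain ⟨p₀, hp₀⟩ := hne
  have hUsub : U ⊆ Metric.ball p₀ 2 := biInter_subset_of_mem hp₀
  have hUb : Bornology.IsBounded U := (isBounded_ball).subset hUsub
  have hmem : ∀ x : ℂ, x ∈ U ↔ ∀ p ∈ ps, ‖x - p‖ < 2 := by
    intro x; simp [hU, Metric.mem_ball, dist_eq_norm]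
  have hclosed : ∀ x : ℂ, (∀ p ∈ ps, ‖x - p‖ ≤ 2) → x ∈ closure U := by
    intro x hx
    have hseq : ∀ t : ℝ, 0 < t → t ≤ 1 → z₀ + (1-t) • (x - z₀) ∈ U := by
      intro t ht ht1
      rw [hmem]
      intro p hp
      have hid : z₀ + (1-t) • (x - z₀) - p = t • (z₀ - p) + (1-t) • (x - p) := by
        push_cast; simp [smul_eq_mul]; ring
      rw [hid]
      have hb1 := mul_lt_mul_of_pos_left (hz₀ p hp) ht
      have hb2 := mul_le_mul_of_nonneg_left (hx p hp) (by linarith : (0:ℝ) ≤ 1-t)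
      calc ‖t • (z₀ - p) + (1-t) • (x - p)‖ ≤ ‖t • (z₀ - p)‖ + ‖(1-t) • (x - p)‖ := norm_add_le _ _
        _ = t * ‖z₀ - p‖ + (1-t) * ‖x - p‖ := by
            rw [norm_smul, norm_smul, Real.norm_eq_abs, Real.norm_eq_abs,
              abs_of_pos ht, abs_of_nonneg (by linarith : (0:ℝ) ≤ 1-t)]
        _ < 2 := by linarith
    have htend : Tendsto (fun n : ℕ => z₀ + (1 - 1/(n+1:ℝ)) • (x - z₀)) atTop (nhds x) := by
      have h0 : Tendsto (fun n : ℕ => (1 - 1/(n+1:ℝ))) atTop (nhds 1) := by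
        have := tendsto_one_div_add_atTop_nhds_zero_nat (𝕜 := ℝ)
        simpa using Filter.Tendsto.const_sub 1 this
      have h2 : Tendsto (fun n : ℕ => z₀ + (1 - 1/(n+1:ℝ)) • (x - z₀))
          atTop (nhds (z₀ + (1:ℝ) • (x - z₀))) :=
        Filter.Tendsto.const_add _ (Filter.Tendsto.smul h0 tendsto_const_nhds)
      simpa using h2
    refine mem_closure_of_tendsto htend (Filter.Eventually.of_forall fun n => ?_)
    have hpos : (0:ℝ) < 1/(n+1:ℝ) := by positivity
    have hle : 1/((n:ℝ)+1) ≤ 1 := by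
      rw [div_le_one (by positivity)]
      linarith [Nat.cast_nonneg (α := ℝ) n]
    exact hseq (1/(n+1:ℝ)) hpos hle
  have hfr : ∀ w ∈ frontier U, ‖f w‖ ≤ C := by
    intro w hw
    have hwcl : w ∈ closure U := hw.1
    have hnotU : w ∉ U := by
      rw [frontier, hUopen.interior_eq] at hw
      exact hw.2
    have hle : ∀ p ∈ ps, ‖w - p‖ ≤ 2 := by
      intro p hp
      have : closure U ⊆ Metric.closedBall p 2 := by
        apply closure_minimal _ isClosed_closedBall
        intro y hy
        rw [hmem] at hy
        rw [Metric.mem_closedBall, dist_eq_norm]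
        exact le_of_lt (hy p hp)
      have := this hwcl
      rwa [Metric.mem_closedBall, dist_eq_norm] at this
    have hex : ∃ p ∈ ps, ‖w - p‖ = 2 := by
      by_contra hcon
      push_neg at hcon
      apply hnotU
      rw [hmem]
      intro p hp
      exact lt_of_le_of_ne (hle p hp) (hcon p hp)
    exact hC w hle hex
  exact Complex.norm_le_of_forall_mem_frontier_norm_le hUb hf.diffContOnCl hfr (hclosed z hz)


-- B := 32*(2-s3); note B^2 = 1024*(7-4*s3) when s3^2=3
lemma Bsq (s3 : ℝ) (hs3 : s3^2 = 3) : (32*(2-s3))^2 = 1024*(7-4*s3) := by nlinarith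
lemma Bnn (s3 : ℝ) (hs3 : s3^2 = 3) (hs3' : 0 ≤ s3) : 0 ≤ 32*(2-s3) := by nlinarith

lemma normle (z : ℂ) (s3 : ℝ) (hs3 : s3^2 = 3) (hs3' : 0 ≤ s3)
    (h : ‖z‖^2 ≤ 1024*(7-4*s3)) : ‖z‖ ≤ 32*(2-s3) := by
  apply le_of_pow_le_pow_left₀ (n := 2) (by norm_num) (Bnn s3 hs3 hs3')
  rw [Bsq s3 hs3]; exact h

lemma mem3 (p a b c : ℂ) (hp : p ∈ ({a, b, c} : Finset ℂ)) : p = a ∨ p = b ∨ p = c := by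
  simpa using hp

lemma mem4 (p a b c d : ℂ) (hp : p ∈ ({a, b, c, d} : Finset ℂ)) : p = a ∨ p = b ∨ p = c ∨ p = d := by
  simpa using hp

lemma normC34 (w : ℂ) (hw : ‖w‖ ≤ 2) : ‖(3/4 : ℂ) * w + (1/4 : ℂ)‖ < 2 := by
  calc ‖(3/4 : ℂ) * w + (1/4 : ℂ)‖ ≤ ‖(3/4:ℂ)*w‖ + ‖(1/4:ℂ)‖ := norm_add_le _ _
    _ ≤ 3/4*2 + 1/4 := by
        rw [norm_mul]
        have : ‖(3/4 : ℂ)‖ = 3/4 := by norm_num [Complex.norm_def, Complex.normSq_apply]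
        have h2 : ‖(1/4 : ℂ)‖ = 1/4 := by norm_num [Complex.norm_def, Complex.normSq_apply]
        rw [this, h2]
        nlinarith [hw, norm_nonneg w]
    _ < 2 := by norm_num

theorem stepE1 (s3 : ℝ) (hs3 : s3^2=3) (hs3' : 0 ≤ s3) (c : ℂ)
    (h1 : ‖c+1‖ = 2) (h3 : ‖c-1‖ ≤ 2) :
    ∀ d : ℂ, ‖d+1‖ ≤ 2 → ‖d-1‖ ≤ 2 → ‖c-d‖ ≤ 2 →
    ‖(c^2-1)*(d^2-1)*(c-d)‖ ≤ 32*(2-s3) := by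
  have h1' : ‖c+1‖ ≤ 2 := le_of_eq h1
  have hc3 : ‖c‖ ≤ 3 := by
    calc ‖c‖ = ‖(c+1) - 1‖ := by ring_nf
      _ ≤ ‖c+1‖ + ‖(1:ℂ)‖ := norm_sub_le _ _
      _ ≤ 3 := by rw [norm_one]; linarith
  have key := maxmod {-1, 1, c} ((3/4:ℂ) * c)
    (by
      intro p hp
      rcases mem3 p _ _ _ hp with rfl | rfl | hpc
      · have he : (3/4:ℂ) * c - (-1) = (3/4:ℂ)*(c+1) + (1/4:ℂ) := by ring
        rw [he]; exact normC34 _ h1'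
      · have he : (3/4:ℂ) * c - 1 = (3/4:ℂ)*(c-1) + (-(1/4):ℂ) := by ring
        rw [he]
        have := normC34 (-(c-1)) (by rwa [norm_neg])
        calc ‖(3/4:ℂ)*(c-1) + (-(1/4):ℂ)‖ = ‖-((3/4:ℂ)*(-(c-1)) + (1/4:ℂ))‖ := by ring_nf
          _ = ‖(3/4:ℂ)*(-(c-1)) + (1/4:ℂ)‖ := norm_neg _
          _ < 2 := this
      · rw [hpc]
        have he : (3/4:ℂ) * c - c = -((1/4:ℂ) * c) := by ring
        rw [he, norm_neg, norm_mul]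
        have h14 : ‖(1/4 : ℂ)‖ = 1/4 := by norm_num [Complex.norm_def, Complex.normSq_apply]
        rw [h14]; nlinarith)
    (by simp)
    (fun x => (c^2-1)*(x^2-1)*(c-x))
    (by fun_prop)
    (32*(2-s3))
    (by
      intro x hxall hxex
      obtain ⟨p, hp, hpe⟩ := hxex
      have hx1 : ‖x+1‖ ≤ 2 := by have := hxall (-1) (by simp); simpa [sub_neg_eq_add] using this
      have hx2 : ‖x-1‖ ≤ 2 := hxall 1 (by simp)
      have hx3 : ‖x-c‖ ≤ 2 := hxall c (by simp)
      have hcx : ‖c-x‖ ≤ 2 := by rwa [norm_sub_rev] at hx3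
      rcases mem3 p _ _ _ hp with rfl | rfl | hpc
      · have hpe' : ‖x+1‖ = 2 := by rwa [sub_neg_eq_add] at hpe
        exact normle _ s3 hs3 hs3' (caseA c x s3 hs3 hs3' h1 hpe' h3 hx2 hcx)
      · exact normle _ s3 hs3 hs3' (caseB c x s3 hs3 hs3' h1 hpe h3 hx1 hcx)
      · rw [hpc] at hpe
        have hpe' : ‖c-x‖ = 2 := by rwa [norm_sub_rev] at hpe
        exact normle _ s3 hs3 hs3' (caseC c x s3 hs3 hs3' h1 hpe' h3 hx1 hx2))
  intro d hd1 hd2 hd3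
  apply key d
  intro p hp
  rcases mem3 p _ _ _ hp with rfl | rfl | hpc
  · rwa [sub_neg_eq_add]
  · exact hd2
  · rw [hpc]
    rwa [norm_sub_rev] at hd3

theorem stepE2 (s3 : ℝ) (hs3 : s3^2=3) (hs3' : 0 ≤ s3) (c : ℂ)
    (h1 : ‖c-1‖ = 2) (h3 : ‖c+1‖ ≤ 2) :
    ∀ d : ℂ, ‖d+1‖ ≤ 2 → ‖d-1‖ ≤ 2 → ‖c-d‖ ≤ 2 →
    ‖(c^2-1)*(d^2-1)*(c-d)‖ ≤ 32*(2-s3) := by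
  intro d hd1 hd2 hd3
  have h1' : ‖(-c)+1‖ = 2 := by rw [show (-c)+1 = -(c-1) by ring, norm_neg]; exact h1
  have h3' : ‖(-c)-1‖ ≤ 2 := by rw [show (-c)-1 = -(c+1) by ring, norm_neg]; exact h3
  have key := stepE1 s3 hs3 hs3' (-c) h1' h3' (-d)
    (by rw [show (-d)+1 = -(d-1) by ring, norm_neg]; exact hd2)
    (by rw [show (-d)-1 = -(d+1) by ring, norm_neg]; exact hd1)
    (by rw [show (-c)-(-d) = -(c-d) by ring, norm_neg]; exact hd3)
  have hid : ((-c)^2-1)*((-d)^2-1)*((-c)-(-d)) = -((c^2-1)*(d^2-1)*(c-d)) := by ring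
  rw [hid, norm_neg] at key
  exact key

theorem stepE3 (s3 : ℝ) (hs3 : s3^2=3) (hs3' : 0 ≤ s3) (c d : ℂ)
    (h5 : ‖c-d‖ = 2) (h1 : ‖c+1‖ ≤ 2) (h2 : ‖c-1‖ ≤ 2) (h3 : ‖d+1‖ ≤ 2) (h4 : ‖d-1‖ ≤ 2) :
    ‖(c^2-1)*(d^2-1)*(c-d)‖ ≤ 32*(2-s3) := by
  by_cases hw2 : c - d = 2
  · -- degenerate: ‖c+1‖ = 2 forced
    have h4' : ‖(c+1) - (d-1)‖ = 4 := by
      rw [show (c+1)-(d-1) = (c-d)+2 by ring, hw2]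
      norm_num
    have : (4:ℝ) ≤ ‖c+1‖ + ‖d-1‖ := by
      calc (4:ℝ) = ‖(c+1)-(d-1)‖ := h4'.symm
        _ ≤ ‖c+1‖ + ‖d-1‖ := norm_sub_le _ _
    have he : ‖c+1‖ = 2 := le_antisymm h1 (by linarith)
    exact stepE1 s3 hs3 hs3' c he h2 d h3 h4 (le_of_eq h5)
  by_cases hw2' : c - d = -2
  · have h4' : ‖(c-1) - (d+1)‖ = 4 := by
      rw [show (c-1)-(d+1) = (c-d)-2 by ring, hw2']
      norm_num
    have : (4:ℝ) ≤ ‖c-1‖ + ‖d+1‖ := by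
      calc (4:ℝ) = ‖(c-1)-(d+1)‖ := h4'.symm
        _ ≤ ‖c-1‖ + ‖d+1‖ := norm_sub_le _ _
    have he : ‖c-1‖ = 2 := le_antisymm h2 (by linarith)
    exact stepE2 s3 hs3 hs3' c he h1 d h3 h4 (le_of_eq h5)
  -- nondegenerate
  set w := c - d with hwdef
  have hnw : ‖w‖ = 2 := h5
  have hnw2 : w.re^2 + w.im^2 = 4 := by
    have : ‖w‖^2 = 4 := by rw [hnw]; norm_num
    rw [show ‖w‖^2 = w.re^2+w.im^2 by
      rw [Complex.sq_norm, Complex.normSq_apply]; ring] at this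
    exact this
  have hrelt : w.re < 2 := by
    rcases lt_or_ge w.re 2 with hlt | hge
    · exact hlt
    · exfalso
      have him : w.im = 0 := by nlinarith
      have hre : w.re = 2 := by nlinarith
      exact hw2 (by rw [hwdef] at hre him ⊢; exact Complex.ext (by simp [hre]) (by simp [him]))
  have hregt : -2 < w.re := by
    rcases lt_or_ge (-2) w.re with hlt | hge
    · exact hlt
    · exfalso
      have him : w.im = 0 := by nlinarith
      have hre : w.re = -2 := by nlinarith
      exact hw2' (by rw [hwdef] at hre him ⊢; exact Complex.ext (by simp [hre]) (by simp [him]))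
  have sqlt : ∀ z : ℂ, z.re^2+z.im^2 < 4 → ‖z‖ < 2 := by
    intro z hz
    nlinarith [norm_nonneg z, show ‖z‖^2 = z.re^2+z.im^2 by
      rw [Complex.sq_norm, Complex.normSq_apply]; ring]
  have hplus : ‖(1/2:ℂ)*w + 1‖ < 2 := by
    apply sqlt
    simp [Complex.add_re, Complex.add_im, Complex.mul_re, Complex.mul_im]
    nlinarith
  have hminus : ‖(1/2:ℂ)*w - 1‖ < 2 := by
    apply sqlt
    simp [Complex.sub_re, Complex.sub_im, Complex.mul_re, Complex.mul_im]
    nlinarith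
  have key := maxmod {-1, 1, w-1, w+1} ((1/2:ℂ) * w)
    (by
      intro p hp
      rcases mem4 p _ _ _ _ hp with rfl | rfl | hpc | hpc
      · rw [show (1/2:ℂ)*w - (-1) = (1/2:ℂ)*w + 1 by ring]; exact hplus
      · exact hminus
      · rw [hpc, show (1/2:ℂ)*w - (w-1) = -((1/2:ℂ)*w - 1) by ring, norm_neg]; exact hminus
      · rw [hpc, show (1/2:ℂ)*w - (w+1) = -((1/2:ℂ)*w + 1) by ring, norm_neg]; exact hplus)
    (by simp)
    (fun x => (x^2-1)*((x-w)^2-1)*w)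
    (by fun_prop)
    (32*(2-s3))
    (by
      intro x hxall hxex
      obtain ⟨p, hp, hpe⟩ := hxex
      have hx1 : ‖x+1‖ ≤ 2 := by have := hxall (-1) (by simp); rwa [sub_neg_eq_add] at this
      have hx2 : ‖x-1‖ ≤ 2 := hxall 1 (by simp)
      have hx3 : ‖(x-w)+1‖ ≤ 2 := by
        have := hxall (w-1) (by simp)
        rwa [show x-(w-1) = (x-w)+1 by ring] at this
      have hx4 : ‖(x-w)-1‖ ≤ 2 := by
        have := hxall (w+1) (by simp)
        rwa [show x-(w+1) = (x-w)-1 by ring] at this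
      have hxw : ‖x-(x-w)‖ = 2 := by rw [show x-(x-w) = w by ring]; exact hnw
      rcases mem4 p _ _ _ _ hp with rfl | rfl | hpc | hpc
      · -- ‖x+1‖ = 2 : caseC x (x-w)
        have hpe' : ‖x+1‖ = 2 := by rwa [sub_neg_eq_add] at hpe
        have hb := caseC x (x-w) s3 hs3 hs3' hpe' hxw hx2 hx3 hx4
        have hid : ((x)^2-1)*((x-w)^2-1)*(x-(x-w)) = (x^2-1)*((x-w)^2-1)*w := by ring
        rw [hid] at hb
        exact normle _ s3 hs3 hs3' hb
      · -- ‖x-1‖ = 2 : caseC (-x) (-(x-w))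
        have h1' : ‖(-x)+1‖ = 2 := by rw [show (-x)+1 = -(x-1) by ring, norm_neg]; exact hpe
        have hcd : ‖(-x)-(-(x-w))‖ = 2 := by
          rw [show (-x)-(-(x-w)) = -w by ring, norm_neg]; exact hnw
        have hb := caseC (-x) (-(x-w)) s3 hs3 hs3' h1' hcd
          (by rw [show (-x)-1 = -(x+1) by ring, norm_neg]; exact hx1)
          (by rw [show (-(x-w))+1 = -((x-w)-1) by ring, norm_neg]; exact hx4)
          (by rw [show (-(x-w))-1 = -((x-w)+1) by ring, norm_neg]; exact hx3)
        have hid : ((-x)^2-1)*((-(x-w))^2-1)*((-x)-(-(x-w))) = -((x^2-1)*((x-w)^2-1)*w) := by ring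
        rw [hid, norm_neg] at hb
        exact normle _ s3 hs3 hs3' hb
      · -- ‖x-(w-1)‖ = 2 i.e. ‖(x-w)+1‖ = 2 : caseC (x-w) x
        rw [hpc] at hpe
        have h1' : ‖(x-w)+1‖ = 2 := by rwa [show x-(w-1) = (x-w)+1 by ring] at hpe
        have hcd : ‖(x-w)-x‖ = 2 := by rw [show (x-w)-x = -w by ring, norm_neg]; exact hnw
        have hb := caseC (x-w) x s3 hs3 hs3' h1' hcd hx4 hx1 hx2
        have hid : ((x-w)^2-1)*(x^2-1)*((x-w)-x) = -((x^2-1)*((x-w)^2-1)*w) := by ring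
        rw [hid, norm_neg] at hb
        exact normle _ s3 hs3 hs3' hb
      · -- ‖x-(w+1)‖ = 2 i.e. ‖(x-w)-1‖ = 2 : caseC (-(x-w)) (-x)
        rw [hpc] at hpe
        have h1' : ‖(-(x-w))+1‖ = 2 := by
          rw [show (-(x-w))+1 = -((x-w)-1) by ring, norm_neg]
          rwa [show x-(w+1) = (x-w)-1 by ring] at hpe
        have hcd : ‖(-(x-w))-(-x)‖ = 2 := by
          rw [show (-(x-w))-(-x) = w by ring]; exact hnw
        have hb := caseC (-(x-w)) (-x) s3 hs3 hs3' h1' hcd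
          (by rw [show (-(x-w))-1 = -((x-w)+1) by ring, norm_neg]; exact hx3)
          (by rw [show (-x)+1 = -(x-1) by ring, norm_neg]; exact hx2)
          (by rw [show (-x)-1 = -(x+1) by ring, norm_neg]; exact hx1)
        have hid : ((-(x-w))^2-1)*((-x)^2-1)*((-(x-w))-(-x)) = (x^2-1)*((x-w)^2-1)*w := by ring
        rw [hid] at hb
        exact normle _ s3 hs3 hs3' hb)
  have hc := key c (by
    intro p hp
    rcases mem4 p _ _ _ _ hp with rfl | rfl | hpc | hpc
    · rwa [sub_neg_eq_add]
    · exact h2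
    · rw [hpc, show c-(w-1) = d+1 by rw [hwdef]; ring]; exact h3
    · rw [hpc, show c-(w+1) = d-1 by rw [hwdef]; ring]; exact h4)
  have hc' : ‖(c^2-1)*((c-w)^2-1)*w‖ ≤ 32*(2-s3) := hc
  rw [show c-w = d from by rw [hwdef]; ring] at hc'
  exact hc' 

theorem coreIneq (s3 : ℝ) (hs3 : s3^2=3) (hs3' : 0 ≤ s3) (c d : ℂ)
    (h1 : ‖c+1‖ ≤ 2) (h2 : ‖c-1‖ ≤ 2) (h3 : ‖d+1‖ ≤ 2) (h4 : ‖d-1‖ ≤ 2) (h5 : ‖c-d‖ ≤ 2) :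
    ‖(c^2-1)*(d^2-1)*(c-d)‖ ≤ 32*(2-s3) := by
  have hd3 : ‖d‖ ≤ 3 := by
    calc ‖d‖ = ‖(d+1) - 1‖ := by ring_nf
      _ ≤ ‖d+1‖ + ‖(1:ℂ)‖ := norm_sub_le _ _
      _ ≤ 3 := by rw [norm_one]; linarith
  have key := maxmod {-1, 1, d} ((3/4:ℂ) * d)
    (by
      intro p hp
      rcases mem3 p _ _ _ hp with rfl | rfl | hpc
      · rw [show (3/4:ℂ)*d - (-1) = (3/4:ℂ)*(d+1) + (1/4:ℂ) by ring]
        exact normC34 _ h3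
      · rw [show (3/4:ℂ)*d - 1 = -((3/4:ℂ)*(-(d-1)) + (1/4:ℂ)) by ring, norm_neg]
        exact normC34 _ (by rwa [norm_neg])
      · rw [hpc, show (3/4:ℂ)*d - d = -((1/4:ℂ)*d) by ring, norm_neg, norm_mul]
        have h14 : ‖(1/4 : ℂ)‖ = 1/4 := by norm_num [Complex.norm_def, Complex.normSq_apply]
        rw [h14]; nlinarith)
    (by simp)
    (fun x => (x^2-1)*(d^2-1)*(x-d))
    (by fun_prop)
    (32*(2-s3))
    (by
      intro x hxall hxex
      obtain ⟨p, hp, hpe⟩ := hxex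
      have hx1 : ‖x+1‖ ≤ 2 := by have := hxall (-1) (by simp); rwa [sub_neg_eq_add] at this
      have hx2 : ‖x-1‖ ≤ 2 := hxall 1 (by simp)
      have hx3 : ‖x-d‖ ≤ 2 := hxall d (by simp)
      rcases mem3 p _ _ _ hp with rfl | rfl | hpc
      · have hpe' : ‖x+1‖ = 2 := by rwa [sub_neg_eq_add] at hpe
        exact stepE1 s3 hs3 hs3' x hpe' hx2 d h3 h4 hx3
      · exact stepE2 s3 hs3 hs3' x hpe hx1 d h3 h4 hx3
      · rw [hpc] at hpe
        exact stepE3 s3 hs3 hs3' x d hpe hx1 hx2 h3 h4)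
  exact key c (by
    intro p hp
    rcases mem3 p _ _ _ hp with rfl | rfl | hpc
    · rwa [sub_neg_eq_add]
    · exact h2
    · rw [hpc]; exact h5)


theorem pairBound (s3 : ℝ) (hs3 : s3^2=3) (hs3' : 0 ≤ s3) (a b x y : ℂ)
    (hab : dist a b = 2)
    (hax : dist a x ≤ 2) (hay : dist a y ≤ 2) (hbx : dist b x ≤ 2)
    (hby : dist b y ≤ 2) (hxy : dist x y ≤ 2) :
    dist a b * (dist a x * dist b x) * (dist a y * dist b y) * dist x y ≤ 64*(2-s3) := by
  set u := (b - a)/2 with hu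
  have hu1 : ‖u‖ = 1 := by
    rw [hu, norm_div]
    rw [show ‖b-a‖ = 2 by rw [← dist_eq_norm, dist_comm]; exact hab]
    norm_num
  have hu0 : u ≠ 0 := by
    intro h; rw [h] at hu1; simp at hu1
  set m := (a+b)/2 with hm
  set c := (x - m)/u with hc
  set d := (y - m)/u with hd
  have hdiv : ∀ w : ℂ, ‖w/u‖ = ‖w‖ := by
    intro w; rw [norm_div, hu1, div_one]
  have hca : c + 1 = (x - a)/u := by
    rw [hc]; field_simp; rw [hm, hu]; ring
  have hcb : c - 1 = (x - b)/u := by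
    rw [hc]; field_simp; rw [hm, hu]; ring
  have hda : d + 1 = (y - a)/u := by
    rw [hd]; field_simp; rw [hm, hu]; ring
  have hdb : d - 1 = (y - b)/u := by
    rw [hd]; field_simp; rw [hm, hu]; ring
  have hcd : c - d = (x - y)/u := by
    rw [hc, hd]; field_simp; ring
  have n1 : ‖c+1‖ = dist a x := by rw [hca, hdiv, ← dist_eq_norm, dist_comm]
  have n2 : ‖c-1‖ = dist b x := by rw [hcb, hdiv, ← dist_eq_norm, dist_comm]
  have n3 : ‖d+1‖ = dist a y := by rw [hda, hdiv, ← dist_eq_norm, dist_comm]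
  have n4 : ‖d-1‖ = dist b y := by rw [hdb, hdiv, ← dist_eq_norm, dist_comm]
  have n5 : ‖c-d‖ = dist x y := by rw [hcd, hdiv, ← dist_eq_norm]
  have key := coreIneq s3 hs3 hs3' c d (by rw [n1]; exact hax) (by rw [n2]; exact hbx)
    (by rw [n3]; exact hay) (by rw [n4]; exact hby) (by rw [n5]; exact hxy)
  have hexp : ‖(c^2-1)*(d^2-1)*(c-d)‖
      = (dist a x * dist b x) * (dist a y * dist b y) * dist x y := by
    rw [show (c^2-1 : ℂ) = (c+1)*(c-1) by ring, show (d^2-1 : ℂ) = (d+1)*(d-1) by ring]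
    rw [norm_mul, norm_mul, norm_mul, norm_mul, n1, n2, n3, n4, n5]
  rw [hexp] at key
  rw [hab]
  nlinarith [key, dist_nonneg (x := a) (y := x), dist_nonneg (x := b) (y := x),
    dist_nonneg (x := a) (y := y), dist_nonneg (x := b) (y := y), dist_nonneg (x := x) (y := y)]

theorem fourPoint (s3 : ℝ) (hs3 : s3^2=3) (hs3' : 0 ≤ s3) (a b x y : ℂ)
    (hab : dist a b ≤ 2) (hax : dist a x ≤ 2) (hay : dist a y ≤ 2)
    (hbx : dist b x ≤ 2) (hby : dist b y ≤ 2) (hxy : dist x y ≤ 2) :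
    dist a b * (dist a x * dist b x) * (dist a y * dist b y) * dist x y ≤ 64*(2-s3) := by
  have hBnn : (0:ℝ) ≤ 64*(2-s3) := by nlinarith
  set M := max (max (dist a b) (dist a x)) (max (max (dist a y) (dist b x)) (max (dist b y) (dist x y))) with hM
  have hM2 : M ≤ 2 := by
    rw [hM]; simp only [max_le_iff]; exact ⟨⟨hab, hax⟩, ⟨hay, hbx⟩, hby, hxy⟩
  rcases le_or_gt M 0 with hM0 | hM0
  · -- all distances zero
    have h1 : dist a b = 0 := le_antisymm (le_trans (by rw [hM]; exact le_max_of_le_left (le_max_left _ _)) hM0) dist_nonneg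
    rw [h1]
    simp
    nlinarith
  -- scale by 2/M
  set r := 2/M with hr
  have hr1 : 1 ≤ r := by rw [hr]; rw [le_div_iff₀ hM0]; linarith
  have hrpos : 0 < r := by linarith
  have hscale : ∀ u v : ℂ, dist ((r:ℂ)*u) ((r:ℂ)*v) = r * dist u v := by
    intro u v
    rw [dist_eq_norm, dist_eq_norm, show (r:ℂ)*u - (r:ℂ)*v = (r:ℂ)*(u-v) by ring,
      norm_mul, Complex.norm_real, Real.norm_eq_abs, abs_of_pos hrpos]
  set a' := (r:ℂ)*a
  set b' := (r:ℂ)*b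
  set x' := (r:ℂ)*x
  set y' := (r:ℂ)*y
  have sab : dist a' b' = r * dist a b := hscale a b
  have sax : dist a' x' = r * dist a x := hscale a x
  have say : dist a' y' = r * dist a y := hscale a y
  have sbx : dist b' x' = r * dist b x := hscale b x
  have sby : dist b' y' = r * dist b y := hscale b y
  have sxy : dist x' y' = r * dist x y := hscale x y
  -- scaled distances ≤ 2 : r * d ≤ r * M = 2
  have hrM : r * M = 2 := by rw [hr]; field_simp
  have hble : ∀ d : ℝ, d ≤ M → r * d ≤ 2 := by
    intro d hd
    calc r * d ≤ r * M := by apply mul_le_mul_of_nonneg_left hd (le_of_lt hrpos)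
      _ = 2 := hrM
  have mab : dist a b ≤ M := by rw [hM]; exact le_max_of_le_left (le_max_left _ _)
  have max_ : dist a x ≤ M := by rw [hM]; exact le_max_of_le_left (le_max_right _ _)
  have may : dist a y ≤ M := by rw [hM]; exact le_max_of_le_right (le_max_of_le_left (le_max_left _ _))
  have mbx : dist b x ≤ M := by rw [hM]; exact le_max_of_le_right (le_max_of_le_left (le_max_right _ _))
  have mby : dist b y ≤ M := by rw [hM]; exact le_max_of_le_right (le_max_of_le_right (le_max_left _ _))
  have mxy : dist x y ≤ M := by rw [hM]; exact le_max_of_le_right (le_max_of_le_right (le_max_right _ _))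
  have cab : dist a' b' ≤ 2 := by rw [sab]; exact hble _ mab
  have cax : dist a' x' ≤ 2 := by rw [sax]; exact hble _ max_
  have cay : dist a' y' ≤ 2 := by rw [say]; exact hble _ may
  have cbx : dist b' x' ≤ 2 := by rw [sbx]; exact hble _ mbx
  have cby : dist b' y' ≤ 2 := by rw [sby]; exact hble _ mby
  have cxy : dist x' y' ≤ 2 := by rw [sxy]; exact hble _ mxy
  -- the product of scaled ≥ product of original
  have hprod : dist a b * (dist a x * dist b x) * (dist a y * dist b y) * dist x y
      ≤ dist a' b' * (dist a' x' * dist b' x') * (dist a' y' * dist b' y') * dist x' y' := by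
    rw [sab, sax, say, sbx, sby, sxy]
    have h6 : dist a b * (dist a x * dist b x) * (dist a y * dist b y) * dist x y * 1
        ≤ dist a b * (dist a x * dist b x) * (dist a y * dist b y) * dist x y * (r*r*r*r*r*r) := by
      apply mul_le_mul_of_nonneg_left
      · nlinarith [hr1, mul_le_mul hr1 hr1 (by norm_num) (by linarith : (0:ℝ) ≤ r), sq_nonneg (r-1), sq_nonneg (r*r-1), sq_nonneg (r*r*r-1)]
      · have d1 := dist_nonneg (x := a) (y := b)
        have d2 := dist_nonneg (x := a) (y := x)
        have d3 := dist_nonneg (x := b) (y := x)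
        have d4 := dist_nonneg (x := a) (y := y)
        have d5 := dist_nonneg (x := b) (y := y)
        have d6 := dist_nonneg (x := x) (y := y)
        positivity
    calc dist a b * (dist a x * dist b x) * (dist a y * dist b y) * dist x y
        = dist a b * (dist a x * dist b x) * (dist a y * dist b y) * dist x y * 1 := by ring
      _ ≤ dist a b * (dist a x * dist b x) * (dist a y * dist b y) * dist x y * (r*r*r*r*r*r) := h6
      _ = r * dist a b * (r * dist a x * (r * dist b x)) * (r * dist a y * (r * dist b y)) * (r * dist x y) := by ring
  apply le_trans hprod
  -- one of the scaled distances equals 2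
  have hone : M = dist a b ∨ M = dist a x ∨ M = dist a y ∨ M = dist b x ∨ M = dist b y ∨ M = dist x y := by
    rw [hM]
    rcases max_choice (max (dist a b) (dist a x)) (max (max (dist a y) (dist b x)) (max (dist b y) (dist x y))) with h | h <;> rw [h]
    · rcases max_choice (dist a b) (dist a x) with h2 | h2 <;> rw [h2] <;> tauto
    · rcases max_choice (max (dist a y) (dist b x)) (max (dist b y) (dist x y)) with h2 | h2 <;> rw [h2]
      · rcases max_choice (dist a y) (dist b x) with h3 | h3 <;> rw [h3] <;> tauto
      · rcases max_choice (dist b y) (dist x y) with h3 | h3 <;> rw [h3] <;> tauto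
  rcases hone with he | he | he | he | he | he
  · -- max pair (a,b)
    have h2 : dist a' b' = 2 := by rw [sab, ← he, hrM]
    exact pairBound s3 hs3 hs3' a' b' x' y' h2 cax cay cbx cby cxy
  · -- max pair (a,x) : pairBound a' x' b' y'
    have h2 : dist a' x' = 2 := by rw [sax, ← he, hrM]
    have := pairBound s3 hs3 hs3' a' x' b' y' h2 cab cay (by rw [dist_comm]; exact cbx) cxy cby
    calc dist a' b' * (dist a' x' * dist b' x') * (dist a' y' * dist b' y') * dist x' y'
        = dist a' x' * (dist a' b' * dist x' b') * (dist a' y' * dist x' y') * dist b' y' := by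
          rw [dist_comm x' b']; ring
      _ ≤ 64*(2-s3) := this
  · -- max pair (a,y) : pairBound a' y' b' x'
    have h2 : dist a' y' = 2 := by rw [say, ← he, hrM]
    have := pairBound s3 hs3 hs3' a' y' b' x' h2 cab cax (by rw [dist_comm]; exact cby) (by rw [dist_comm]; exact cxy) cbx
    calc dist a' b' * (dist a' x' * dist b' x') * (dist a' y' * dist b' y') * dist x' y'
        = dist a' y' * (dist a' b' * dist y' b') * (dist a' x' * dist y' x') * dist b' x' := by
          rw [dist_comm y' b', dist_comm y' x']; ring
      _ ≤ 64*(2-s3) := this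
  · -- max pair (b,x) : pairBound b' x' a' y'
    have h2 : dist b' x' = 2 := by rw [sbx, ← he, hrM]
    have := pairBound s3 hs3 hs3' b' x' a' y' h2 (by rw [dist_comm]; exact cab) cby (by rw [dist_comm]; exact cax) cxy cay
    calc dist a' b' * (dist a' x' * dist b' x') * (dist a' y' * dist b' y') * dist x' y'
        = dist b' x' * (dist b' a' * dist x' a') * (dist b' y' * dist x' y') * dist a' y' := by
          rw [dist_comm b' a', dist_comm x' a']; ring
      _ ≤ 64*(2-s3) := this
  · -- max pair (b,y) : pairBound b' y' a' x'
    have h2 : dist b' y' = 2 := by rw [sby, ← he, hrM]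
    have := pairBound s3 hs3 hs3' b' y' a' x' h2 (by rw [dist_comm]; exact cab) cbx (by rw [dist_comm]; exact cay) (by rw [dist_comm]; exact cxy) cax
    calc dist a' b' * (dist a' x' * dist b' x') * (dist a' y' * dist b' y') * dist x' y'
        = dist b' y' * (dist b' a' * dist y' a') * (dist b' x' * dist y' x') * dist a' x' := by
          rw [dist_comm b' a', dist_comm y' a', dist_comm y' x']; ring
      _ ≤ 64*(2-s3) := this
  · -- max pair (x,y) : pairBound x' y' a' b'
    have h2 : dist x' y' = 2 := by rw [sxy, ← he, hrM]
    have := pairBound s3 hs3 hs3' x' y' a' b' h2 (by rw [dist_comm]; exact cax) (by rw [dist_comm]; exact cbx) (by rw [dist_comm]; exact cay) (by rw [dist_comm]; exact cby) cab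
    calc dist a' b' * (dist a' x' * dist b' x') * (dist a' y' * dist b' y') * dist x' y'
        = dist x' y' * (dist x' a' * dist y' a') * (dist x' b' * dist y' b') * dist a' b' := by
          rw [dist_comm x' a', dist_comm y' a', dist_comm x' b', dist_comm y' b']; ring
      _ ≤ 64*(2-s3) := this


set_option maxHeartbeats 3000000 in
lemma DeltaExpand (z : Fin 4 → ℂ) :
    Delta 4 z = (dist (z 0) (z 1) * (dist (z 0) (z 2) * dist (z 1) (z 2)) *
      (dist (z 0) (z 3) * dist (z 1) (z 3)) * dist (z 2) (z 3))^2 := by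
  rw [Delta, Finset.prod_filter, ← Finset.univ_product_univ, Finset.prod_product' (f := fun i j => if i ≠ j then dist (z i) (z j) else 1)]
  rw [Fin.prod_univ_four]
  simp only [Fin.prod_univ_four]
  simp only [ne_eq, Fin.reduceEq, reduceIte, not_false_eq_true, if_true, if_false, not_true_eq_false]
  rw [dist_comm (z 1) (z 0), dist_comm (z 2) (z 0), dist_comm (z 2) (z 1),
    dist_comm (z 3) (z 0), dist_comm (z 3) (z 1), dist_comm (z 3) (z 2)]
  ring

lemma dsq (u v : ℂ) : dist u v ^ 2 = (u.re-v.re)^2+(u.im-v.im)^2 := by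
  rw [dist_eq_norm, Complex.sq_norm, Complex.normSq_apply]
  simp [Complex.sub_re, Complex.sub_im]
  ring

lemma dle (u v : ℂ) (h : dist u v ^ 2 ≤ 4) : dist u v ≤ 2 := by
  nlinarith [dist_nonneg (x := u) (y := v)]

lemma k0 : kite 0 = 0 := rfl
lemma k1 : kite 1 = 2 := rfl
lemma k2 : kite 2 = (Real.sqrt 3 : ℂ) + Complex.I := rfl
lemma k3 : kite 3 = (Real.sqrt 3 : ℂ) - Complex.I := rfl

lemma s3sq : (Real.sqrt 3)^2 = 3 := Real.sq_sqrt (by norm_num)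
lemma s3nn : 0 ≤ Real.sqrt 3 := Real.sqrt_nonneg 3
lemma s3ge1 : 1 ≤ Real.sqrt 3 := by
  nlinarith [s3sq, s3nn]

-- squared distances of kite
lemma kd01 : dist (kite 0) (kite 1) ^ 2 = 4 := by
  rw [k0, k1, dsq]; norm_num
lemma kd02 : dist (kite 0) (kite 2) ^ 2 = 4 := by
  rw [k0, k2, dsq]; simp; nlinarith [s3sq]
lemma kd03 : dist (kite 0) (kite 3) ^ 2 = 4 := by
  rw [k0, k3, dsq]; simp; nlinarith [s3sq]
lemma kd12 : dist (kite 1) (kite 2) ^ 2 = 8-4*Real.sqrt 3 := by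
  rw [k1, k2, dsq]; simp; nlinarith [s3sq]
lemma kd13 : dist (kite 1) (kite 3) ^ 2 = 8-4*Real.sqrt 3 := by
  rw [k1, k3, dsq]; simp; nlinarith [s3sq]
lemma kd23 : dist (kite 2) (kite 3) ^ 2 = 4 := by
  rw [k2, k3, dsq]; simp; norm_num

lemma kiteAdmissible : Admissible 4 kite := by
  intro i j
  have h01 := dle _ _ (le_of_eq kd01)
  have h02 := dle _ _ (le_of_eq kd02)
  have h03 := dle _ _ (le_of_eq kd03)
  have h23 := dle _ _ (le_of_eq kd23)
  have h12 : dist (kite 1) (kite 2) ≤ 2 := dle _ _ (by rw [kd12]; nlinarith [s3ge1])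
  have h13 : dist (kite 1) (kite 3) ≤ 2 := dle _ _ (by rw [kd13]; nlinarith [s3ge1])
  fin_cases i <;> fin_cases j <;>
    simp_all [dist_comm] <;>
    first
      | rfl
      | assumption
      | (rw [dist_comm]; assumption)

lemma kiteDelta : Delta 4 kite = 4096*(7-4*Real.sqrt 3) := by
  rw [DeltaExpand]
  have e : (dist (kite 0) (kite 1) * (dist (kite 0) (kite 2) * dist (kite 1) (kite 2)) *
      (dist (kite 0) (kite 3) * dist (kite 1) (kite 3)) * dist (kite 2) (kite 3))^2
      = dist (kite 0) (kite 1)^2 * dist (kite 0) (kite 2)^2 * dist (kite 1) (kite 2)^2 *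
        dist (kite 0) (kite 3)^2 * dist (kite 1) (kite 3)^2 * dist (kite 2) (kite 3)^2 := by
    ring
  rw [e, kd01, kd02, kd03, kd12, kd13, kd23]
  nlinarith [s3sq]

lemma mainBound (z : Fin 4 → ℂ) (hz : Admissible 4 z) :
    Delta 4 z ≤ 4096*(7-4*Real.sqrt 3) := by
  rw [DeltaExpand]
  have key := fourPoint (Real.sqrt 3) s3sq s3nn (z 0) (z 1) (z 2) (z 3)
    (hz 0 1) (hz 0 2) (hz 0 3) (hz 1 2) (hz 1 3) (hz 2 3)
  have hnn : 0 ≤ dist (z 0) (z 1) * (dist (z 0) (z 2) * dist (z 1) (z 2)) *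
      (dist (z 0) (z 3) * dist (z 1) (z 3)) * dist (z 2) (z 3) := by
    have d1 := dist_nonneg (x := z 0) (y := z 1)
    have d2 := dist_nonneg (x := z 0) (y := z 2)
    have d3 := dist_nonneg (x := z 1) (y := z 2)
    have d4 := dist_nonneg (x := z 0) (y := z 3)
    have d5 := dist_nonneg (x := z 1) (y := z 3)
    have d6 := dist_nonneg (x := z 2) (y := z 3)
    positivity
  nlinarith [key, hnn, s3sq]

theorem stmt11 :
    Dmax 4 = 4096 * (7 - 4 * Real.sqrt 3) ∧
    Admissible 4 kite ∧
    Delta 4 kite = 4096 * (7 - 4 * Real.sqrt 3) := by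
  refine ⟨?_, kiteAdmissible, kiteDelta⟩
  rw [Dmax]
  apply IsGreatest.csSup_eq
  constructor
  · exact ⟨kite, kiteAdmissible, kiteDelta⟩
  · rintro d ⟨z, hz, rfl⟩
    exact mainBound z hz
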